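/- arXiv:1202.0251 — 2 statements merged into one kernel-verified Lean document; each statement's English description precedes it below -/
import Mathlib

section
/- Let Φ : X → ℂ, r : X → ℝ≥0, and χ : X → [0,1] be functions on a set X, and suppose there are constants K > 0 and c > 0 with 2·Re Φ(x) + |Φ(x)|/2 ≥ c·(r(x) + K·d(x)³) for all x with χ(x) > 0, where d : X → ℝ≥0. Define S(x) = χ(x)·Φ(x) + (1 - χ(x))·d(x)². Assume moreover χ(x) = 0 whenever d(x) ≥ 3ε/4 and d(x) ≤ 3ε/4 ≤ 1 on the support of χ. Then there is a constant c' > 0 such that |S(x)| ≥ c'·d(x)³ for all x ∈ X with d(x) ≤ 1. In particular S(x) ≠ 0 whenever d(x) > 0. -/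
theorem patched_function_lower_bound {X : Type*}
    (Φ : X → ℂ) (r d χ : X → ℝ) (S : X → ℂ)
    (K c ε : ℝ) (hK : 0 < K) (hc : 0 < c) (hε : 0 < ε)
    (hχ0 : ∀ x, 0 ≤ χ x) (hχ1 : ∀ x, χ x ≤ 1)
    (hr : ∀ x, 0 ≤ r x) (hd : ∀ x, 0 ≤ d x)
    (hlow : ∀ x, 0 < χ x →
      2 * (Φ x).re + ‖Φ x‖ / 2 ≥ c * (r x + K * d x ^ 3))
    (hsupp : ∀ x, 3 * ε / 4 ≤ d x → χ x = 0)
    (hsmall : ∀ x, 0 < χ x → d x ≤ 3 * ε / 4 ∧ 3 * ε / 4 ≤ 1)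
    (hS : ∀ x, S x = (χ x : ℂ) * Φ x + ((1 : ℂ) - (χ x : ℂ)) * ((d x ^ 2 : ℝ) : ℂ)) :
    ∃ c' > 0, ∀ x, d x ≤ 1 → ‖S x‖ ≥ c' * d x ^ 3 ∧
      (0 < d x → S x ≠ 0) := by
  have hm : 0 < min (c * K) (3 / 2) := lt_min (mul_pos hc hK) (by norm_num)
  refine ⟨2 / 5 * min (c * K) (3 / 2), by positivity, fun x hx1 => ?_⟩
  have key : ‖S x‖ ≥ 2 / 5 * min (c * K) (3 / 2) * d x ^ 3 := by
    have hd32 : d x ^ 3 ≤ d x ^ 2 := pow_le_pow_of_le_one (hd x) hx1 (by norm_num)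
    by_cases hχ : χ x = 0
    · have hSx : S x = ((d x ^ 2 : ℝ) : ℂ) := by rw [hS, hχ]; push_cast; ring
      rw [hSx, Complex.norm_real, Real.norm_eq_abs, abs_of_nonneg (by positivity)]
      have h1 : min (c * K) (3 / 2) ≤ 3 / 2 := min_le_right _ _
      nlinarith [pow_nonneg (hd x) 3]
    · have ht : 0 < χ x := lt_of_le_of_ne (hχ0 x) (Ne.symm hχ)
      have h1 := hlow x ht
      have hreS : (S x).re = χ x * (Φ x).re + (1 - χ x) * d x ^ 2 := by
        rw [hS]; simp [Complex.add_re, Complex.mul_re, Complex.sub_re, Complex.sub_im,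
          Complex.ofReal_re, Complex.ofReal_im, ← Complex.ofReal_pow]
      have hre_le : (S x).re ≤ ‖S x‖ := Complex.re_le_norm _
      have hprod : (χ x : ℂ) * Φ x = S x - ((1 : ℂ) - (χ x : ℂ)) * ((d x ^ 2 : ℝ) : ℂ) := by
        rw [hS]; ring
      have habs2 : χ x * ‖Φ x‖ ≤ ‖S x‖ + (1 - χ x) * d x ^ 2 := by
        have : χ x * ‖Φ x‖ = ‖(χ x : ℂ) * Φ x‖ := by
          rw [norm_mul, Complex.norm_real, Real.norm_eq_abs, abs_of_nonneg (hχ0 x)]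
        rw [this, hprod]
        calc ‖S x - ((1 : ℂ) - (χ x : ℂ)) * ((d x ^ 2 : ℝ) : ℂ)‖
            ≤ ‖S x‖ + ‖((1 : ℂ) - (χ x : ℂ)) * ((d x ^ 2 : ℝ) : ℂ)‖ :=
              norm_sub_le _ _
          _ = ‖S x‖ + (1 - χ x) * d x ^ 2 := by
              rw [norm_mul]
              have h1c : ((1 : ℂ) - (χ x : ℂ)) = (((1 - χ x : ℝ)) : ℂ) := by push_cast; ring
              rw [h1c, Complex.norm_real, Real.norm_eq_abs, Complex.norm_real, Real.norm_eq_abs,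
                abs_of_nonneg (by linarith [hχ1 x]), abs_of_nonneg (by positivity)]
      have hmin1 : min (c * K) (3 / 2) ≤ c * K := min_le_left _ _
      have hmin2 : min (c * K) (3 / 2) ≤ 3 / 2 := min_le_right _ _
      have hχmul : χ x * (2 * (Φ x).re + ‖Φ x‖ / 2)
          ≥ χ x * (c * (r x + K * d x ^ 3)) :=
        mul_le_mul_of_nonneg_left h1 (le_of_lt ht)
      nlinarith [mul_nonneg (mul_nonneg hc.le (hr x)) ht.le,
        mul_nonneg (sub_nonneg.2 (hχ1 x)) (sub_nonneg.2 hd32),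
        mul_nonneg ht.le (pow_nonneg (hd x) 3),
        mul_le_mul_of_nonneg_right hmin1 (mul_nonneg ht.le (pow_nonneg (hd x) 3)),
        mul_le_mul_of_nonneg_right hmin2 (mul_nonneg (sub_nonneg.2 (hχ1 x)) (pow_nonneg (hd x) 3))]
  refine ⟨key, fun hdx hSz => ?_⟩
  rw [hSz] at key
  simp only [norm_zero] at key
  nlinarith [pow_pos hdx 3]
end

section
/- Let r : ℂⁿ → ℝ be a C³ function, and define Φ_K(ζ,z) = F(ζ,z) - r(ζ) + K‖ζ-z‖³ where F is the Levi polynomial of r at ζ. Then there exist a neighborhood of the diagonal and a constant M such that for all ζ, z with ‖ζ-z‖ small, 2·Re Φ_K(ζ,z) ≥ -r(ζ) - r(z) + L(r,ζ; ζ-z) + (2K - M)·‖ζ-z‖³, where L(r,ζ;·) is the Levi form of r at ζ and M depends only on the C³-norm of r. In particular, for K ≥ M/2, 2·Re Φ_K(ζ,z) ≥ -r(ζ) - r(z) + L(r,ζ; ζ-z) + K·‖ζ-z‖³. -/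
open Complex

/-- Wirtinger derivative `∂f/∂ζ_j = (1/2)(∂f/∂x_j - i ∂f/∂y_j)`. -/
noncomputable def wirtingerDz {n : ℕ} (f : EuclideanSpace ℂ (Fin n) → ℂ)
    (ζ : EuclideanSpace ℂ (Fin n)) (j : Fin n) : ℂ :=
  (1 / 2 : ℂ) * (fderiv ℝ f ζ (EuclideanSpace.single j 1)
    - Complex.I * fderiv ℝ f ζ (EuclideanSpace.single j Complex.I))

/-- Conjugate Wirtinger derivative `∂f/∂ζ̄_j = (1/2)(∂f/∂x_j + i ∂f/∂y_j)`. -/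
noncomputable def wirtingerDzbar {n : ℕ} (f : EuclideanSpace ℂ (Fin n) → ℂ)
    (ζ : EuclideanSpace ℂ (Fin n)) (j : Fin n) : ℂ :=
  (1 / 2 : ℂ) * (fderiv ℝ f ζ (EuclideanSpace.single j 1)
    + Complex.I * fderiv ℝ f ζ (EuclideanSpace.single j Complex.I))

/-- The Levi polynomial of `r` at `ζ` evaluated at `z`. -/
noncomputable def leviPolynomial {n : ℕ} (r : EuclideanSpace ℂ (Fin n) → ℝ)
    (ζ z : EuclideanSpace ℂ (Fin n)) : ℂ :=
  (∑ j : Fin n, wirtingerDz (fun w => (r w : ℂ)) ζ j * (ζ j - z j))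
    - (1 / 2 : ℂ) * ∑ j : Fin n, ∑ k : Fin n,
        wirtingerDz (fun w => wirtingerDz (fun u => (r u : ℂ)) w k) ζ j
          * (ζ j - z j) * (ζ k - z k)

/-- The Levi form `L(r,ζ;t) = ∑_{j,k} ∂²r/∂ζ_j∂ζ̄_k(ζ) t_j conj(t_k)`. -/
noncomputable def leviForm {n : ℕ} (r : EuclideanSpace ℂ (Fin n) → ℝ)
    (ζ t : EuclideanSpace ℂ (Fin n)) : ℂ :=
  ∑ j : Fin n, ∑ k : Fin n,
    wirtingerDzbar (fun w => wirtingerDz (fun u => (r u : ℂ)) w j) ζ k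
      * t j * (starRingEnd ℂ) (t k)

/-- The modified support function `Φ_K(ζ,z) = F(ζ,z) - r(ζ) + K‖ζ-z‖³`. -/
noncomputable def PhiK {n : ℕ} (r : EuclideanSpace ℂ (Fin n) → ℝ) (K : ℝ)
    (ζ z : EuclideanSpace ℂ (Fin n)) : ℂ :=
  leviPolynomial r ζ z - (r ζ : ℂ) + ((K * ‖ζ - z‖ ^ 3 : ℝ) : ℂ)

variable {n : ℕ}
private abbrev Es (n : ℕ) := EuclideanSpace ℂ (Fin n)

private lemma esum (h : Es n) : h = ∑ j, EuclideanSpace.single j (h j) := by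
  ext i; rw [WithLp.ofLp_sum, Finset.sum_apply]; simp [EuclideanSpace.single_apply]

private lemma esingle (j : Fin n) (c : ℂ) : EuclideanSpace.single j c
    = c.re • EuclideanSpace.single j (1:ℂ) + c.im • EuclideanSpace.single j Complex.I := by
  ext i
  simp [EuclideanSpace.single_apply]
  split
  · simp [Complex.ext_iff]
  · simp

private lemma clm_decomp (φ : Es n →L[ℝ] ℝ) (h : Es n) :
    φ h = ∑ j, ((h j).re * φ (EuclideanSpace.single j 1)
      + (h j).im * φ (EuclideanSpace.single j Complex.I)) := by
  conv_lhs => rw [esum h, map_sum]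
  refine Finset.sum_congr rfl fun j _ => ?_
  rw [esingle j (h j)]
  simp [smul_eq_mul]

private lemma bilin_decomp (B : Es n →L[ℝ] Es n →L[ℝ] ℝ) (h : Es n) :
    B h h = ∑ j, ∑ k,
      ((h j).re * (h k).re * B (EuclideanSpace.single j 1) (EuclideanSpace.single k 1)
      + (h j).re * (h k).im * B (EuclideanSpace.single j 1) (EuclideanSpace.single k Complex.I)
      + (h j).im * (h k).re * B (EuclideanSpace.single j Complex.I) (EuclideanSpace.single k 1)
      + (h j).im * (h k).im * B (EuclideanSpace.single j Complex.I) (EuclideanSpace.single k Complex.I)) := by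
  have key : ∀ a : Es n, B h a = ∑ j, ((h j).re * B (EuclideanSpace.single j 1) a
      + (h j).im * B (EuclideanSpace.single j Complex.I) a) := by
    intro a
    simpa [ContinuousLinearMap.flip_apply] using clm_decomp (B.flip a) h
  calc B h h = ∑ k, ((h k).re * B h (EuclideanSpace.single k 1)
        + (h k).im * B h (EuclideanSpace.single k Complex.I)) := clm_decomp (B h) h
    _ = ∑ k, ∑ j, ((h j).re * (h k).re * B (EuclideanSpace.single j 1) (EuclideanSpace.single k 1)
      + (h j).re * (h k).im * B (EuclideanSpace.single j 1) (EuclideanSpace.single k Complex.I)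
      + (h j).im * (h k).re * B (EuclideanSpace.single j Complex.I) (EuclideanSpace.single k 1)
      + (h j).im * (h k).im * B (EuclideanSpace.single j Complex.I) (EuclideanSpace.single k Complex.I)) := by
        refine Finset.sum_congr rfl fun k _ => ?_
        rw [key, key, Finset.mul_sum, Finset.mul_sum, ← Finset.sum_add_distrib]
        exact Finset.sum_congr rfl fun j _ => by ring
    _ = _ := Finset.sum_comm

private lemma re1 (a b : ℝ) (u : ℂ) :
    ((1/2:ℂ) * ((a:ℂ) - Complex.I*(b:ℂ)) * u).re = (a * u.re + b * u.im)/2 := by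
  simp [Complex.mul_re, Complex.mul_im]; ring

private lemma keyid (a b c d : ℝ) (u w : ℂ) :
    ((1/2:ℂ)*((1/2:ℂ)*((a:ℂ) - Complex.I*(b:ℂ)) - Complex.I*((1/2:ℂ)*((c:ℂ) - Complex.I*(d:ℂ)))) * u * w).re
    + ((1/2:ℂ)*((1/2:ℂ)*((a:ℂ) - Complex.I*(c:ℂ)) + Complex.I*((1/2:ℂ)*((b:ℂ) - Complex.I*(d:ℂ)))) * u * (starRingEnd ℂ) w).re
    = (1/2)*(u.re*w.re*a + u.re*w.im*b + u.im*w.re*c + u.im*w.im*d) := by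
  simp [Complex.mul_re, Complex.mul_im]; ring

private lemma wz1 (r : Es n → ℝ) (hr : Differentiable ℝ r) (w : Es n) (j : Fin n) :
    wirtingerDz (fun u => ((r u : ℝ) : ℂ)) w j
      = (1/2 : ℂ) * ((fderiv ℝ r w (EuclideanSpace.single j 1) : ℂ)
          - Complex.I * (fderiv ℝ r w (EuclideanSpace.single j Complex.I) : ℂ)) := by
  have hd : fderiv ℝ (fun u => ((r u : ℝ) : ℂ)) w = Complex.ofRealCLM.comp (fderiv ℝ r w) :=
    (Complex.ofRealCLM.hasFDerivAt.comp w (hr w).hasFDerivAt).fderiv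
  simp [wirtingerDz, hd]

private lemma hwd (r : Es n → ℝ) (hr : ContDiff ℝ 3 r) (ζ : Es n) (k : Fin n) (v : Es n) :
    fderiv ℝ (fun w => wirtingerDz (fun u => ((r u : ℝ) : ℂ)) w k) ζ v
      = (1/2 : ℂ) * ((fderiv ℝ (fderiv ℝ r) ζ v (EuclideanSpace.single k 1) : ℂ)
          - Complex.I * (fderiv ℝ (fderiv ℝ r) ζ v (EuclideanSpace.single k Complex.I) : ℂ)) := by
  have hdr : Differentiable ℝ r := hr.differentiable (by norm_num)
  have h2 : ContDiff ℝ 2 (fderiv ℝ r) := hr.fderiv_right (by norm_num)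
  have hF : HasFDerivAt (fderiv ℝ r) (fderiv ℝ (fderiv ℝ r) ζ) ζ :=
    (h2.differentiable (by norm_num) ζ).hasFDerivAt
  have key : ∀ a : Es n, HasFDerivAt (fun w => ((fderiv ℝ r w a : ℝ) : ℂ))
      (Complex.ofRealCLM.comp ((fderiv ℝ (fderiv ℝ r) ζ).flip a)) ζ := by
    intro a
    have h3 := hF.clm_apply (hasFDerivAt_const a ζ)
    simp only [ContinuousLinearMap.comp_zero, zero_add] at h3
    exact Complex.ofRealCLM.hasFDerivAt.comp ζ h3
  have hfun : (fun w => wirtingerDz (fun u => ((r u : ℝ) : ℂ)) w k)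
      = fun w => (1/2 : ℂ) * (((fderiv ℝ r w (EuclideanSpace.single k 1) : ℝ) : ℂ)
          - Complex.I * ((fderiv ℝ r w (EuclideanSpace.single k Complex.I) : ℝ) : ℂ)) :=
    funext fun w => wz1 r hdr w k
  rw [hfun]
  have hd : fderiv ℝ (fun w => (1/2 : ℂ) * (((fderiv ℝ r w (EuclideanSpace.single k 1) : ℝ) : ℂ)
          - Complex.I * ((fderiv ℝ r w (EuclideanSpace.single k Complex.I) : ℝ) : ℂ))) ζ = _ :=
    (((key (EuclideanSpace.single k 1)).sub
      ((key (EuclideanSpace.single k Complex.I)).const_mul Complex.I)).const_mul (1/2 : ℂ)).fderiv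
  rw [hd]
  simp [ContinuousLinearMap.smul_apply, ContinuousLinearMap.sub_apply,
    ContinuousLinearMap.comp_apply, ContinuousLinearMap.flip_apply, smul_eq_mul]

private lemma phi_re (r : Es n → ℝ) (hr : ContDiff ℝ 3 r) (K : ℝ) (ζ z : Es n) :
    2 * (PhiK r K ζ z).re =
      fderiv ℝ r ζ (ζ - z) - (1/2) * (fderiv ℝ (fderiv ℝ r) ζ (ζ - z) (ζ - z))
      + (leviForm r ζ (ζ - z)).re - 2 * r ζ + 2 * (K * ‖ζ - z‖ ^ 3) := by
  have hdr : Differentiable ℝ r := hr.differentiable (by norm_num)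
  have h2 : ContDiff ℝ 2 (fderiv ℝ r) := hr.fderiv_right (by norm_num)
  have hF : HasFDerivAt (fderiv ℝ r) (fderiv ℝ (fderiv ℝ r) ζ) ζ :=
    (h2.differentiable (by norm_num) ζ).hasFDerivAt
  set B := fderiv ℝ (fderiv ℝ r) ζ with hBdef
  have hsym : ∀ u v : Es n, B u v = B v u :=
    second_derivative_symmetric (fun y => (hdr y).hasFDerivAt) hF
  -- second derivative coefficient formulas
  have hA : ∀ j k : Fin n, wirtingerDz (fun w => wirtingerDz (fun u => ((r u : ℝ):ℂ)) w k) ζ j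
      = (1/2:ℂ)*((1/2:ℂ)*((B (EuclideanSpace.single j 1) (EuclideanSpace.single k 1) : ℂ)
          - Complex.I*((B (EuclideanSpace.single j 1) (EuclideanSpace.single k Complex.I) : ℝ):ℂ))
        - Complex.I*((1/2:ℂ)*((B (EuclideanSpace.single j Complex.I) (EuclideanSpace.single k 1) : ℂ)
          - Complex.I*((B (EuclideanSpace.single j Complex.I) (EuclideanSpace.single k Complex.I) : ℝ):ℂ)))) := by
    intro j k
    rw [wirtingerDz, hwd r hr ζ k, hwd r hr ζ k]
  have hC : ∀ j k : Fin n, wirtingerDzbar (fun w => wirtingerDz (fun u => ((r u : ℝ):ℂ)) w j) ζ k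
      = (1/2:ℂ)*((1/2:ℂ)*((B (EuclideanSpace.single j 1) (EuclideanSpace.single k 1) : ℂ)
          - Complex.I*((B (EuclideanSpace.single j Complex.I) (EuclideanSpace.single k 1) : ℝ):ℂ))
        + Complex.I*((1/2:ℂ)*((B (EuclideanSpace.single j 1) (EuclideanSpace.single k Complex.I) : ℂ)
          - Complex.I*((B (EuclideanSpace.single j Complex.I) (EuclideanSpace.single k Complex.I) : ℝ):ℂ)))) := by
    intro j k
    rw [wirtingerDzbar, hwd r hr ζ j, hwd r hr ζ j,
      hsym (EuclideanSpace.single k 1) (EuclideanSpace.single j 1),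
      hsym (EuclideanSpace.single k 1) (EuclideanSpace.single j Complex.I),
      hsym (EuclideanSpace.single k Complex.I) (EuclideanSpace.single j 1),
      hsym (EuclideanSpace.single k Complex.I) (EuclideanSpace.single j Complex.I)]
  -- first-order term
  have hS1 : 2 * (∑ j, wirtingerDz (fun u => ((r u : ℝ):ℂ)) ζ j * (ζ j - z j)).re
      = fderiv ℝ r ζ (ζ - z) := by
    rw [Complex.re_sum, clm_decomp (fderiv ℝ r ζ) (ζ - z), Finset.mul_sum]
    refine Finset.sum_congr rfl fun j _ => ?_
    rw [wz1 r hdr ζ j, re1]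
    simp only [show ∀ i : Fin n, (ζ - z) i = ζ i - z i from fun _ => rfl]
    ring
  -- second-order identity
  have hkey : (∑ j, ∑ k, wirtingerDz (fun w => wirtingerDz (fun u => ((r u : ℝ):ℂ)) w k) ζ j
        * (ζ j - z j) * (ζ k - z k)).re
      + (leviForm r ζ (ζ - z)).re = (1/2) * (B (ζ - z) (ζ - z)) := by
    rw [leviForm, Complex.re_sum, Complex.re_sum, ← Finset.sum_add_distrib,
      bilin_decomp B (ζ - z), Finset.mul_sum]
    refine Finset.sum_congr rfl fun j _ => ?_
    rw [Complex.re_sum, Complex.re_sum, ← Finset.sum_add_distrib, Finset.mul_sum]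
    refine Finset.sum_congr rfl fun k _ => ?_
    rw [hA j k, hC j k]
    exact keyid _ _ _ _ (ζ j - z j) (ζ k - z k)
  -- assemble
  have hre : (PhiK r K ζ z).re
      = (∑ j, wirtingerDz (fun u => ((r u : ℝ):ℂ)) ζ j * (ζ j - z j)).re
        - (1/2) * (∑ j, ∑ k, wirtingerDz (fun w => wirtingerDz (fun u => ((r u : ℝ):ℂ)) w k) ζ j
            * (ζ j - z j) * (ζ k - z k)).re
        - r ζ + K * ‖ζ - z‖ ^ 3 := by
    rw [PhiK, leviPolynomial, show (1/2 : ℂ) = ((1/2 : ℝ) : ℂ) by norm_num]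
    simp only [Complex.add_re, Complex.sub_re, Complex.ofReal_re, Complex.re_ofReal_mul]
  linarith [hS1, hkey, hre]

private lemma taylor3 (r : Es n → ℝ) (hr : ContDiff ℝ 3 r) (Q : Set (Es n)) (hQ : IsCompact Q) :
    ∃ M : ℝ, 0 ≤ M ∧ ∀ ζ ∈ Q, ∀ z ∈ Q, ‖ζ - z‖ < 1 →
      |r z - r ζ + fderiv ℝ r ζ (ζ - z)
        - (1/2) * fderiv ℝ (fderiv ℝ r) ζ (ζ - z) (ζ - z)| ≤ M * ‖ζ - z‖ ^ 3 := by
  have hdr : Differentiable ℝ r := hr.differentiable (by norm_num)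
  have h2 : ContDiff ℝ 2 (fderiv ℝ r) := hr.fderiv_right (by norm_num)
  have h3 : ContDiff ℝ 1 (fderiv ℝ (fderiv ℝ r)) := h2.fderiv_right (by norm_num)
  have hD2d : Differentiable ℝ (fderiv ℝ (fderiv ℝ r)) := h3.differentiable (by norm_num)
  have hcont : Continuous (fderiv ℝ (fderiv ℝ (fderiv ℝ r))) :=
    (h3.fderiv_right (m := 0) (by norm_num)).continuous
  obtain ⟨K, hK⟩ := LocallyLipschitzOn.exists_lipschitzOnWith_of_compact (hQ.cthickening (r := 1))
    h3.locallyLipschitz.locallyLipschitzOn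
  set C : ℝ := (K : ℝ) with hCK
  set C0 := max C 0 with hC0def
  refine ⟨C0, le_max_right _ _, ?_⟩
  intro ζ hζ z hz hρ1
  set ρ := ‖ζ - z‖ with hρdef
  have hρ0 : 0 ≤ ρ := norm_nonneg _
  have hball1 : Metric.closedBall ζ 1 ⊆ Metric.cthickening 1 Q :=
    Metric.closedBall_subset_cthickening hζ 1
  have hsub : Metric.closedBall ζ ρ ⊆ Metric.closedBall ζ 1 :=
    Metric.closedBall_subset_closedBall hρ1.le
  set F1 := fderiv ℝ r with hF1def
  set B := fderiv ℝ F1 ζ with hBdef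
  have hF : HasFDerivAt F1 B ζ := (h2.differentiable (by norm_num) ζ).hasFDerivAt
  have hsym : ∀ u v : Es n, B u v = B v u :=
    second_derivative_symmetric (fun y => (hdr y).hasFDerivAt) hF
  -- step 1 : Lipschitz bound for D2 on the small ball
  have step1 : ∀ x ∈ Metric.closedBall ζ ρ, ‖fderiv ℝ F1 x - B‖ ≤ C0 * ρ := by
    intro x hx
    have hle : ‖fderiv ℝ F1 x - fderiv ℝ F1 ζ‖ ≤ C0 * ‖x - ζ‖ := by
      have hl := hK.dist_le_mul x (hball1 (hsub hx)) ζ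
        (hball1 (Metric.mem_closedBall_self zero_le_one))
      rw [dist_eq_norm, dist_eq_norm] at hl
      exact hl.trans (mul_le_mul_of_nonneg_right (le_max_left _ _) (norm_nonneg _))
    refine hle.trans ?_
    have : ‖x - ζ‖ ≤ ρ := by
      rw [← dist_eq_norm]; exact Metric.mem_closedBall.mp hx
    exact mul_le_mul_of_nonneg_left this (le_trans (le_max_right _ _) le_rfl)
  -- step 2 : first-order Taylor bound for F1
  have step2 : ∀ x ∈ Metric.closedBall ζ ρ, ‖F1 x - F1 ζ - B (x - ζ)‖ ≤ C0 * ρ ^ 2 := by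
    intro x hx
    have hle := (convex_closedBall ζ ρ).norm_image_sub_le_of_norm_fderiv_le'
      (fun y _ => h2.differentiable (by norm_num) y) step1
      (Metric.mem_closedBall_self hρ0) hx
    refine hle.trans ?_
    have hxζ : ‖x - ζ‖ ≤ ρ := by rw [← dist_eq_norm]; exact Metric.mem_closedBall.mp hx
    have hC00 : (0:ℝ) ≤ C0 := le_max_right _ _
    calc C0 * ρ * ‖x - ζ‖ ≤ C0 * ρ * ρ := by
          exact mul_le_mul_of_nonneg_left hxζ (mul_nonneg hC00 hρ0)
      _ = C0 * ρ ^ 2 := by ring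
  -- step 3 : second-order Taylor bound for r
  set g : Es n → ℝ := fun x => r x - F1 ζ (x - ζ) - (1/2) * (B (x - ζ) (x - ζ)) with hgdef
  have hgderiv : ∀ x ∈ Metric.closedBall ζ ρ,
      HasFDerivWithinAt g (F1 x - F1 ζ - B (x - ζ)) (Metric.closedBall ζ ρ) x := by
    intro x _
    have hu : HasFDerivAt (fun y : Es n => y - ζ) (ContinuousLinearMap.id ℝ (Es n)) x :=
      (hasFDerivAt_id x).sub_const ζ
    have hlin : HasFDerivAt (fun y : Es n => F1 ζ (y - ζ)) (F1 ζ) x := by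
      have h' := (F1 ζ).hasFDerivAt.comp x hu
      rw [ContinuousLinearMap.comp_id] at h'
      exact h'
    have hc : HasFDerivAt (fun y : Es n => B (y - ζ)) B x := by
      have h' := B.hasFDerivAt.comp x hu
      rw [ContinuousLinearMap.comp_id] at h'
      exact h'
    have hq := hc.clm_apply hu
    have hq2 := hq.const_mul (1/2 : ℝ)
    have hEq : (1/2 : ℝ) • ((B (x - ζ)).comp (ContinuousLinearMap.id ℝ (Es n))
        + B.flip (x - ζ)) = B (x - ζ) := by
      ext v
      simp only [ContinuousLinearMap.smul_apply, ContinuousLinearMap.add_apply,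
        ContinuousLinearMap.comp_apply, ContinuousLinearMap.flip_apply,
        ContinuousLinearMap.id_apply, smul_eq_mul]
      rw [hsym v (x - ζ)]
      ring
    have hg : HasFDerivAt g (F1 x - F1 ζ - B (x - ζ)) x := by
      have := ((hdr x).hasFDerivAt.sub hlin).sub hq2
      rwa [hEq] at this
    exact hg.hasFDerivWithinAt
  have hzball : z ∈ Metric.closedBall ζ ρ := by
    rw [Metric.mem_closedBall, dist_comm, dist_eq_norm]
  have hmain := (convex_closedBall ζ ρ).norm_image_sub_le_of_norm_hasFDerivWithin_le
    hgderiv step2 (Metric.mem_closedBall_self hρ0) hzball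
  -- rewrite g z - g ζ
  have hgζ : g ζ = r ζ := by simp [hgdef]
  have hgz : g z - g ζ
      = r z - r ζ + F1 ζ (ζ - z) - (1/2) * (B (ζ - z) (ζ - z)) := by
    rw [hgζ, hgdef]
    simp only
    rw [show z - ζ = -(ζ - z) from (neg_sub ζ z).symm]
    simp only [map_neg, ContinuousLinearMap.neg_apply]
    ring
  rw [← Real.norm_eq_abs, ← hgz]
  refine hmain.trans ?_
  have hzζ : ‖z - ζ‖ = ρ := norm_sub_rev z ζ
  rw [hzζ]
  ring_nf
  exact le_rfl

theorem support_function_lower_bound (n : ℕ)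
    (r : EuclideanSpace ℂ (Fin n) → ℝ) (hr : ContDiff ℝ 3 r)
    (Q : Set (EuclideanSpace ℂ (Fin n))) (hQ : IsCompact Q) :
    ∃ ε > (0 : ℝ), ∃ M : ℝ,
      (∀ K : ℝ, ∀ ζ ∈ Q, ∀ z ∈ Q, ‖ζ - z‖ < ε →
        2 * (PhiK r K ζ z).re ≥
          -(r ζ) - r z + (leviForm r ζ (ζ - z)).re + (2 * K - M) * ‖ζ - z‖ ^ 3) ∧
      (∀ K : ℝ, M / 2 ≤ K → ∀ ζ ∈ Q, ∀ z ∈ Q, ‖ζ - z‖ < ε →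
        2 * (PhiK r K ζ z).re ≥
          -(r ζ) - r z + (leviForm r ζ (ζ - z)).re + K * ‖ζ - z‖ ^ 3) := by
  obtain ⟨M, hM0, hT⟩ := taylor3 r hr Q hQ
  have hM3 : ∀ ζ z : EuclideanSpace ℂ (Fin n), (0:ℝ) ≤ ‖ζ - z‖ ^ 3 := fun ζ z => by positivity
  refine ⟨1, one_pos, 2 * M, ?_, ?_⟩
  · intro K ζ hζ z hz hlt
    have hp := phi_re r hr K ζ z
    have ht := abs_le.mp (hT ζ hζ z hz hlt)
    have hMc : 0 ≤ M * ‖ζ - z‖ ^ 3 := mul_nonneg hM0 (hM3 ζ z)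
    rw [ge_iff_le]
    nlinarith [ht.1, hp, hMc]
  · intro K hK ζ hζ z hz hlt
    have hp := phi_re r hr K ζ z
    have ht := abs_le.mp (hT ζ hζ z hz hlt)
    have hKM : M * ‖ζ - z‖ ^ 3 ≤ K * ‖ζ - z‖ ^ 3 :=
      mul_le_mul_of_nonneg_right (by linarith) (hM3 ζ z)
    rw [ge_iff_le]
    nlinarith [ht.1, hp, hKM]
end
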